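/- Let n ≥ 1 be a natural number, let α be real with 0 < α < π, and let z be a real number such that z·cot((α + kπ)/n) ≠ 1 for all 0 ≤ k ≤ n−1 and sin(n·arctan z − α) ≠ 0. Then Σ_{k=0}^{n−1} 1/(1 − z·cot((α + kπ)/n)) = (n/(1 + z²)) · (1 − z·cot(n·arctan z − α)). -/

import Mathlib

section Helpers
open Complex Finset
open Complex

lemma exp2_sub_one (z : ℂ) : exp (2*z*I) - 1 = exp (z*I) * (exp (z*I) - exp (-z*I)) := by
  rw [mul_sub, ← Complex.exp_add, ← Complex.exp_add]; norm_num; ring_nf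

lemma sub_exp_ne (z : ℂ) (h : Complex.sin z ≠ 0) : exp (z*I) - exp (-z*I) ≠ 0 := by
  intro hc; apply h; rw [Complex.sin, sub_eq_zero] at *; rw [hc]; ring

lemma exp2_ne_one (z : ℂ) (h : Complex.sin z ≠ 0) : exp (2*z*I) ≠ 1 := by
  rw [← sub_ne_zero, exp2_sub_one]
  exact mul_ne_zero (Complex.exp_ne_zero _) (sub_exp_ne z h)

lemma cot_exp (z : ℂ) (h : Complex.sin z ≠ 0) :
    Complex.cot z = I * (exp (2*z*I) + 1) / (exp (2*z*I) - 1) := by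
  have hEF : exp (z*I) * exp (-z*I) = 1 := by rw [← Complex.exp_add]; norm_num
  have h2 : exp (2*z*I) = exp (z*I) * exp (z*I) := by rw [← Complex.exp_add]; ring_nf
  have hden : exp (2*z*I) - 1 ≠ 0 := by
    rw [exp2_sub_one]; exact mul_ne_zero (Complex.exp_ne_zero _) (sub_exp_ne z h)
  rw [Complex.cot_eq_cos_div_sin, div_eq_div_iff h hden, Complex.sin, Complex.cos, h2]
  linear_combination (exp (z*I)) * hEF - ((exp (z*I)*exp (z*I)+1)*((exp (-z*I)-exp (z*I))/2)) * Complex.I_sq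


lemma sumA (n : ℕ) (hn : 1 ≤ n) (ζ w : ℂ) (hζn : ζ^n = 1)
    (hζ : ∀ j, 0 < j → j < n → ζ^j ≠ 1)
    (hw : ∀ k, k < n → w * ζ^k ≠ 1) (hwn : w^n ≠ 1) :
    ∑ k ∈ Finset.range n, 1/(w*ζ^k - 1) = n/(w^n - 1) := by
  have hwn' : w^n - 1 ≠ 0 := sub_ne_zero.2 hwn
  have hζkn : ∀ k : ℕ, (ζ^k)^n = 1 := by
    intro k; rw [← pow_mul, mul_comm, pow_mul, hζn, one_pow]
  have key : ∀ k ∈ Finset.range n, (1:ℂ)/(w*ζ^k - 1)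
      = (∑ j ∈ Finset.range n, w^j * (ζ^j)^k)/(w^n - 1) := by
    intro k hk
    rw [div_eq_div_iff (sub_ne_zero.2 (hw k (Finset.mem_range.1 hk))) hwn', one_mul]
    have : ∀ j ∈ Finset.range n, w^j * (ζ^j)^k = (w*ζ^k)^j := by
      intro j _; rw [mul_pow, ← pow_mul, mul_comm j k, pow_mul]
    rw [Finset.sum_congr rfl this, geom_sum_mul, mul_pow, hζkn, mul_one]
  rw [Finset.sum_congr rfl key, ← Finset.sum_div]
  congr 1
  rw [Finset.sum_comm]
  rw [Finset.sum_eq_single_of_mem 0 (Finset.mem_range.2 hn)]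
  · simp
  · intro j hj hne
    rw [← Finset.mul_sum, geom_sum_eq (hζ j (Nat.pos_of_ne_zero hne) (Finset.mem_range.1 hj)),
      hζkn, sub_self, zero_div, mul_zero]

lemma cot_sum_complex (n : ℕ) (hn : 1 ≤ n) (ζ w : ℂ) (hζn : ζ^n = 1)
    (hζ : ∀ j, 0 < j → j < n → ζ^j ≠ 1)
    (hw : ∀ k, k < n → w * ζ^k ≠ 1) (hwn : w^n ≠ 1) :
    ∑ k ∈ Finset.range n, I*(w*ζ^k+1)/(w*ζ^k-1) = n * (I*(w^n+1)/(w^n-1)) := by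
  have h1 := sumA n hn ζ w hζn hζ hw hwn
  have hwn' : w^n - 1 ≠ 0 := sub_ne_zero.2 hwn
  have step : ∀ k ∈ Finset.range n, I*(w*ζ^k+1)/(w*ζ^k-1) = I + 2*I*(1/(w*ζ^k-1)) := by
    intro k hk
    have h := sub_ne_zero.2 (hw k (Finset.mem_range.1 hk))
    field_simp
    ring
  rw [Finset.sum_congr rfl step, Finset.sum_add_distrib, Finset.sum_const, ← Finset.mul_sum, h1,
    Finset.card_range]
  field_simp
  ring

-- real version: sin x ≠ 0 → exp(2 x I) ≠ 1 (x real coerced)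
lemma exp2_ne_one' (x : ℝ) (h : Real.sin x ≠ 0) : exp (2*(x:ℂ)*I) ≠ 1 := by
  apply exp2_ne_one
  rw [← Complex.ofReal_sin]
  exact_mod_cast h


lemma cot_sum (n : ℕ) (hn : 1 ≤ n) (x : ℝ)
    (h : ∀ k, k < n → Real.sin (x + k * Real.pi / n) ≠ 0)
    (hnx : Real.sin (n * x) ≠ 0) :
    ∑ k ∈ Finset.range n, Real.cot (x + k * Real.pi / n) = n * Real.cot (n * x) := by
  have hn0 : (n:ℂ) ≠ 0 := Nat.cast_ne_zero.2 (by omega)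
  have hπ := Real.pi_pos
  set ζ : ℂ := exp (2*(Real.pi/n : ℝ)*I) with hζdef
  set w : ℂ := exp (2*(x:ℂ)*I) with hwdef
  have hζk : ∀ k : ℕ, ζ^k = exp (2*((k*Real.pi/n : ℝ):ℂ)*I) := by
    intro k
    rw [hζdef, ← Complex.exp_nat_mul]
    congr 1
    push_cast
    ring
  have hwζk : ∀ k : ℕ, w * ζ^k = exp (2*((x + k*Real.pi/n : ℝ):ℂ)*I) := by
    intro k
    rw [hζk, hwdef, ← Complex.exp_add]
    congr 1
    push_cast
    ring
  have hζn : ζ^n = 1 := by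
    rw [hζk]
    have : ((n*Real.pi/n : ℝ):ℂ) = (Real.pi:ℂ) := by
      push_cast
      field_simp
    rw [this]
    exact Complex.exp_two_pi_mul_I
  have hζj : ∀ j, 0 < j → j < n → ζ^j ≠ 1 := by
    intro j hj0 hjn
    rw [hζk]
    apply exp2_ne_one'
    apply ne_of_gt
    apply Real.sin_pos_of_pos_of_lt_pi
    · positivity
    · rw [div_lt_iff₀ (by positivity)]
      have : (j:ℝ) < n := by exact_mod_cast hjn
      nlinarith
  have hwk : ∀ k, k < n → w * ζ^k ≠ 1 := by
    intro k hk
    rw [hwζk]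
    exact exp2_ne_one' _ (h k hk)
  have hwn : w^n ≠ 1 := by
    rw [hwdef, ← Complex.exp_nat_mul]
    have : (n:ℂ) * (2*(x:ℂ)*I) = 2*((n*x : ℝ):ℂ)*I := by push_cast; ring
    rw [this]
    exact exp2_ne_one' _ hnx
  have hC := cot_sum_complex n hn ζ w hζn hζj hwk hwn
  have hcast : ((∑ k ∈ Finset.range n, Real.cot (x + k * Real.pi / n) : ℝ) : ℂ)
      = ((n * Real.cot (n * x) : ℝ) : ℂ) := by
    push_cast [Complex.ofReal_cot]
    have lhs : ∀ k ∈ Finset.range n, Complex.cot ((x:ℂ) + k * Real.pi / n)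
        = I*(w*ζ^k+1)/(w*ζ^k-1) := by
      intro k hk
      have hx : ((x + k*Real.pi/n : ℝ):ℂ) = (x:ℂ) + k * Real.pi / n := by push_cast; ring
      rw [← hx, cot_exp _ (by rw [← Complex.ofReal_sin]; exact_mod_cast h k (Finset.mem_range.1 hk)), hwζk]
    rw [Finset.sum_congr rfl lhs, hC]
    have hx2 : ((n*x : ℝ):ℂ) = (n:ℂ) * x := by push_cast; ring
    rw [← hx2, cot_exp _ (by rw [← Complex.ofReal_sin]; exact_mod_cast hnx)]
    congr 2
    · rw [hwdef, ← Complex.exp_nat_mul]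
      congr 1
      push_cast
      ring
    · rw [hwdef, ← Complex.exp_nat_mul]
      congr 2
      push_cast
      ring
  exact_mod_cast hcast

end Helpers



theorem stmt_7 (n : ℕ) (hn : 1 ≤ n) (α : ℝ) (hα0 : 0 < α) (hαπ : α < Real.pi) (z : ℝ)
    (hz : ∀ k : ℕ, k ≤ n - 1 → z * Real.cot ((α + k * Real.pi) / n) ≠ 1)
    (hs : Real.sin (n * Real.arctan z - α) ≠ 0) :
    ∑ k ∈ Finset.range n, 1 / (1 - z * Real.cot ((α + k * Real.pi) / n)) =
      (n / (1 + z ^ 2)) * (1 - z * Real.cot (n * Real.arctan z - α)) := by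
  have hn0 : (n:ℝ) ≠ 0 := Nat.cast_ne_zero.2 (by omega)
  have hnpos : (0:ℝ) < n := by positivity
  set θ := Real.arctan z with hθdef
  have hcos : 0 < Real.cos θ := Real.cos_arctan_pos z
  have hzt : z = Real.sin θ / Real.cos θ := by
    rw [← Real.tan_eq_sin_div_cos, hθdef, Real.tan_arctan]
  set x : ℝ := α / n - θ with hxdef
  -- per-k facts
  have hsink : ∀ k : ℕ, k < n → Real.sin ((α + k * Real.pi) / n) ≠ 0 := by
    intro k hk
    apply ne_of_gt
    apply Real.sin_pos_of_pos_of_lt_pi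
    · have : (0:ℝ) ≤ k * Real.pi := by positivity
      positivity
    · rw [div_lt_iff₀ hnpos]
      have hk' : (k:ℝ) ≤ n - 1 := by
        have : (k:ℝ) + 1 ≤ n := by exact_mod_cast hk
        linarith
      nlinarith [Real.pi_pos]
  have harg : ∀ k : ℕ, x + k * Real.pi / n = (α + k * Real.pi) / n - θ := by
    intro k; rw [hxdef]; field_simp; ring
  have hone : ∀ k : ℕ, k < n → 1 - z * Real.cot ((α + k * Real.pi) / n) ≠ 0 := by
    intro k hk
    exact sub_ne_zero.2 (Ne.symm (hz k (by omega)))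
  have key : ∀ k : ℕ, k < n → 1 - z * Real.cot ((α + k * Real.pi) / n)
      = Real.sin ((α + k * Real.pi) / n - θ) / (Real.cos θ * Real.sin ((α + k * Real.pi) / n)) := by
    intro k hk
    rw [Real.cot_eq_cos_div_sin, Real.sin_sub, hzt]
    field_simp [hsink k hk]
  have hsd : ∀ k : ℕ, k < n → Real.sin ((α + k * Real.pi) / n - θ) ≠ 0 := by
    intro k hk
    have h1 := hone k hk
    rw [key k hk] at h1
    intro hc
    rw [hc, zero_div] at h1
    exact h1 rfl
  -- term identity
  have term : ∀ k ∈ Finset.range n, 1 / (1 - z * Real.cot ((α + k * Real.pi) / n))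
      = Real.cos θ ^ 2 + Real.sin θ * Real.cos θ * Real.cot (x + k * Real.pi / n) := by
    intro k hk
    have hk' := Finset.mem_range.1 hk
    rw [harg k, key k hk', one_div_div, Real.cot_eq_cos_div_sin]
    have hsk' : Real.sin ((α + k * Real.pi) / n)
        = Real.sin ((α + k * Real.pi) / n - θ) * Real.cos θ
          + Real.cos ((α + k * Real.pi) / n - θ) * Real.sin θ := by
      rw [← Real.sin_add]; ring_nf
    rw [hsk']
    set S := Real.sin ((α + k * Real.pi) / n - θ) with hS
    set C := Real.cos ((α + k * Real.pi) / n - θ) with hC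
    have hS0 : S ≠ 0 := hsd k hk'
    field_simp
  rw [Finset.sum_congr rfl term, Finset.sum_add_distrib, Finset.sum_const, ← Finset.mul_sum,
    Finset.card_range]
  have hsin_nx : Real.sin (n * x) ≠ 0 := by
    have : (n:ℝ) * x = -(n * θ - α) := by rw [hxdef]; field_simp; ring
    rw [this, Real.sin_neg]
    simpa using hs
  have hsum := cot_sum n hn x (fun k hk => by rw [harg k]; exact hsd k hk) hsin_nx
  rw [hsum]
  have hcotnx : Real.cot (n * x) = - Real.cot (n * θ - α) := by
    have : (n:ℝ) * x = -(n * θ - α) := by rw [hxdef]; field_simp; ring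
    rw [this, Real.cot_eq_cos_div_sin, Real.cot_eq_cos_div_sin, Real.sin_neg, Real.cos_neg,
      div_neg]
  rw [hcotnx]
  have hc2 : Real.cos θ ^ 2 = 1 / (1 + z ^ 2) := Real.cos_sq_arctan z
  have hsc : Real.sin θ * Real.cos θ = z * Real.cos θ ^ 2 := by
    rw [hzt]; field_simp
  rw [hsc, hc2]
  have h1z : (1:ℝ) + z ^ 2 ≠ 0 := by positivity
  field_simp
  have hinv : (1 + z ^ 2)⁻¹ * (1 + z ^ 2) = 1 := inv_mul_cancel₀ h1z
  linear_combination (n:ℝ) * hinv
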